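/- Odd rows of the quantum baker matrix: for 0 ≤ n, m < N with n odd, the entry of the quantum baker matrix is 𝖡_{nm} = e^{iπ(n−2m)/N} · (√2/N) · (1 + i·cot(π(n−2m)/N)). -/

import Mathlib

noncomputable section

noncomputable section

/-- Entry of the `M × M` discrete Fourier transform matrix: `M^{-1/2} e^{-2πiab/M}`. -/
def dftEntry (M a b : ℕ) : ℂ :=
  ((Real.sqrt M : ℝ) : ℂ)⁻¹ * Complex.exp (-(2 * Real.pi * Complex.I * a * b) / M)

/-- The `N × N` discrete Fourier transform matrix `(𝓕^N)_{mn} = N^{-1/2} e^{-2πimn/N}`. -/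
def dftMatrix (N : ℕ) : Matrix (Fin N) (Fin N) ℂ :=
  Matrix.of fun m n : Fin N => dftEntry N m n

lemma exp_ne_one_of_not_dvd (K : ℕ) (hK : 0 < K) (c : ℤ) (hc : ¬ (K:ℤ) ∣ c) :
    Complex.exp (2 * Real.pi * Complex.I * c / K) ≠ 1 := by
  intro h
  rw [Complex.exp_eq_one_iff] at h
  obtain ⟨k, hk⟩ := h
  apply hc
  refine ⟨k, ?_⟩
  have hKne : (K:ℂ) ≠ 0 := by exact_mod_cast hK.ne'
  have hπ : (Real.pi : ℂ) ≠ 0 := by exact_mod_cast Real.pi_ne_zero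
  have h2 : (2:ℂ) * Real.pi * Complex.I ≠ 0 := by
    simp [hπ, Complex.I_ne_zero]
  have h3 : (2*(Real.pi:ℂ)*Complex.I) * c = (2*(Real.pi:ℂ)*Complex.I) * ((K:ℂ)*k) := by
    field_simp at hk
    linear_combination (2*(Real.pi:ℂ)*Complex.I) * hk
  have h4 : (c:ℂ) = (K:ℂ)*k := mul_left_cancel₀ h2 h3
  exact_mod_cast h4

end
def Gmat (N : ℕ) : Matrix (Fin N) (Fin N) ℂ :=
  Matrix.of fun a b : Fin N =>
    ((Real.sqrt N : ℝ) : ℂ)⁻¹ * Complex.exp (2 * Real.pi * Complex.I * ((a:ℕ):ℂ) * ((b:ℕ):ℂ) / N)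

lemma sqrt_inv_mul_sqrt_inv (N : ℕ) :
    ((Real.sqrt N : ℝ) : ℂ)⁻¹ * ((Real.sqrt N : ℝ) : ℂ)⁻¹ = ((N:ℝ):ℂ)⁻¹ := by
  rw [← mul_inv]
  norm_cast
  rw [Real.mul_self_sqrt (by positivity)]

lemma dft_mul_g (N : ℕ) (hN : 0 < N) : dftMatrix N * Gmat N = 1 := by
  ext a b
  rw [Matrix.mul_apply]
  have hNne : ((N:ℝ):ℂ) ≠ 0 := by exact_mod_cast hN.ne'
  set d : ℤ := (b:ℕ) - (a:ℕ) with hd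
  have hstep : ∀ k : Fin N, dftMatrix N a k * Gmat N k b
      = ((N:ℝ):ℂ)⁻¹ * Complex.exp (2 * Real.pi * Complex.I * (d:ℂ) / N) ^ (k:ℕ) := by
    intro k
    show dftEntry N a k * (((Real.sqrt N : ℝ) : ℂ)⁻¹ * _) = _
    rw [dftEntry, ← Complex.exp_nat_mul]
    rw [show (((Real.sqrt N:ℝ):ℂ)⁻¹ * Complex.exp (-(2 * Real.pi * Complex.I * ((a:ℕ):ℂ) * ((k:ℕ):ℂ)) / N)) *
        (((Real.sqrt N:ℝ):ℂ)⁻¹ * Complex.exp (2 * Real.pi * Complex.I * ((k:ℕ):ℂ) * ((b:ℕ):ℂ) / N)) =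
        (((Real.sqrt N:ℝ):ℂ)⁻¹ * ((Real.sqrt N:ℝ):ℂ)⁻¹) *
        (Complex.exp (-(2 * Real.pi * Complex.I * ((a:ℕ):ℂ) * ((k:ℕ):ℂ)) / N) *
         Complex.exp (2 * Real.pi * Complex.I * ((k:ℕ):ℂ) * ((b:ℕ):ℂ) / N)) from by ring]
    rw [sqrt_inv_mul_sqrt_inv, ← Complex.exp_add]
    congr 1
    have : (d:ℂ) = ((b:ℕ):ℂ) - ((a:ℕ):ℂ) := by push_cast [hd]; ring
    rw [this]
    field_simp
    ring
  rw [Finset.sum_congr rfl (fun k _ => hstep k), ← Finset.mul_sum]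
  rw [Fin.sum_univ_eq_sum_range (fun k => Complex.exp (2 * Real.pi * Complex.I * (d:ℂ) / N) ^ k)]
  have hNC : ((N:ℕ):ℂ) ≠ 0 := Nat.cast_ne_zero.mpr hN.ne'
  by_cases hab : a = b
  · subst hab
    have : d = 0 := by simp [hd]
    simp [this, Matrix.one_apply, mul_comm]
    exact mul_inv_cancel₀ hNC
  · have hdvd : ¬ (N:ℤ) ∣ d := by
      intro hdv
      have h1 : d ≠ 0 := by
        simp only [hd, sub_ne_zero]
        intro h
        exact hab (Fin.ext (by exact_mod_cast h.symm))
      have h2 : |d| < N := by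
        rw [hd, abs_sub_lt_iff]
        have := b.isLt; have := a.isLt
        constructor <;> [skip; skip] <;> · push_cast; omega
      exact h1 (Int.eq_zero_of_abs_lt_dvd hdv h2)
    have hne1 := exp_ne_one_of_not_dvd N hN d hdvd
    rw [geom_sum_eq hne1]
    have hxN : Complex.exp (2 * Real.pi * Complex.I * (d:ℂ) / N) ^ N = 1 := by
      rw [← Complex.exp_nat_mul]
      rw [show ((N:ℕ):ℂ) * (2 * Real.pi * Complex.I * (d:ℂ) / N) = (d:ℂ) * (2 * Real.pi * Complex.I) from by
        field_simp]
      exact Complex.exp_int_mul_two_pi_mul_I d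
    rw [hxN]
    simp [Matrix.one_apply, hab]
lemma exp_odd_pi_I (c : ℤ) (hc : Odd c) : Complex.exp ((c:ℂ) * Real.pi * Complex.I) = -1 := by
  obtain ⟨t, ht⟩ := hc
  subst ht
  rw [show (((2*t+1 : ℤ)):ℂ) * Real.pi * Complex.I
      = (t:ℂ) * (2 * Real.pi * Complex.I) + Real.pi * Complex.I from by push_cast; ring,
    Complex.exp_add, Complex.exp_int_mul_two_pi_mul_I, Complex.exp_pi_mul_I]
  ring

lemma sqrt_inv_aux (N M : ℕ) (hM : 0 < M) (hNM : N = M + M) :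
    (Real.sqrt N)⁻¹ * (Real.sqrt M)⁻¹ = Real.sqrt 2 / N := by
  have hNpos : (0:ℝ) < N := by exact_mod_cast by omega
  have h2 : Real.sqrt 2 * Real.sqrt N * Real.sqrt M = N := by
    rw [← Real.sqrt_mul (by norm_num), ← Real.sqrt_mul (by positivity)]
    rw [show (2:ℝ) * (N:ℝ) * (M:ℝ) = (N:ℝ)^2 from by
      have : (N:ℝ) = (M:ℝ) + (M:ℝ) := by exact_mod_cast hNM
      rw [this]; ring]
    exact Real.sqrt_sq hNpos.le
  have hsN : Real.sqrt N ≠ 0 := by positivity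
  have hsM : Real.sqrt M ≠ 0 := by
    have : (0:ℝ) < M := by exact_mod_cast hM
    positivity
  rw [eq_div_iff hNpos.ne']
  have key : (Real.sqrt N)⁻¹ * (Real.sqrt M)⁻¹ * (Real.sqrt 2 * Real.sqrt N * Real.sqrt M)
      = Real.sqrt 2 := by
    field_simp
  rw [h2] at key
  exact key

/-- The diagonal phase matrix `Z` with `Z_{nn} = e^{iπn/N}`. -/
def Zmat (N : ℕ) : Matrix (Fin N) (Fin N) ℂ :=
  Matrix.diagonal fun n : Fin N => Complex.exp (Real.pi * Complex.I * (n : ℕ) / N)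

/-- The block-diagonal matrix `D` with upper-left block `𝓕^{N/2}` and lower-right block
`−𝓕^{N/2}`. -/
def Dmat (N : ℕ) : Matrix (Fin N) (Fin N) ℂ :=
  Matrix.of fun m n : Fin N =>
    if (m : ℕ) < N / 2 ∧ (n : ℕ) < N / 2 then dftEntry (N / 2) m n
    else if N / 2 ≤ (m : ℕ) ∧ N / 2 ≤ (n : ℕ) then
      -dftEntry (N / 2) ((m : ℕ) - N / 2) ((n : ℕ) - N / 2)
    else 0

/-- The quantum baker matrix `𝖡 = Z (𝓕^N)⁻¹ D Z⁻²`. -/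
def bakerMatrix (N : ℕ) : Matrix (Fin N) (Fin N) ℂ :=
  Zmat N * (dftMatrix N)⁻¹ * Dmat N * (Zmat N ^ 2)⁻¹

/-- Odd rows of the quantum baker matrix: for `n` odd,
`𝖡_{nm} = e^{iπ(n−2m)/N} · (√2/N) · (1 + i·cot(π(n−2m)/N))`. -/
theorem bakerMatrix_odd_row (N : ℕ) (hN : 0 < N) (hNeven : Even N)
    (n m : Fin N) (hn : Odd (n : ℕ)) :
    bakerMatrix N n m =
      Complex.exp (Real.pi * Complex.I * (((n : ℕ) : ℂ) - 2 * ((m : ℕ) : ℂ)) / N) *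
        ((Real.sqrt 2 / N : ℝ) : ℂ) *
        (1 + Complex.I *
          ((Real.cot (Real.pi * (((n : ℕ) : ℝ) - 2 * ((m : ℕ) : ℝ)) / N) : ℝ) : ℂ)) := by
  obtain ⟨M, hNM⟩ := hNeven
  have hNdiv : N / 2 = M := by omega
  have hM : 0 < M := by
    rcases Nat.eq_zero_or_pos M with h | h
    · exfalso; omega
    · exact h
  have hMN : (n:ℕ) < N := n.isLt
  have hNC : ((N:ℕ):ℂ) ≠ 0 := Nat.cast_ne_zero.mpr hN.ne'
  have hMC : ((M:ℕ):ℂ) ≠ 0 := Nat.cast_ne_zero.mpr hM.ne'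
  have hNMC : ((N:ℕ):ℂ) = 2 * ((M:ℕ):ℂ) := by push_cast [hNM]; ring
  set c : ℤ := (n:ℕ) - 2 * (m:ℕ) with hc
  have hcodd : Odd c := by
    obtain ⟨a, ha⟩ := hn
    refine ⟨(a:ℤ) - (m:ℕ), ?_⟩
    rw [hc]; push_cast [ha]; ring
  have hcC : (c:ℂ) = ((n:ℕ):ℂ) - 2 * ((m:ℕ):ℂ) := by rw [hc]; push_cast; ring
  have hcR : (c:ℝ) = ((n:ℕ):ℝ) - 2 * ((m:ℕ):ℝ) := by rw [hc]; push_cast; ring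
  set q : ℂ := Complex.exp (2 * Real.pi * Complex.I * (c:ℂ) / N) with hq
  have hndvd : ¬ (N:ℤ) ∣ c := by
    intro hdvd
    have h2N : (2:ℤ) ∣ (N:ℤ) := ⟨M, by push_cast [hNM]; ring⟩
    have h2 : (2:ℤ) ∣ c := dvd_trans h2N hdvd
    exact (Int.not_even_iff_odd.mpr hcodd) ((even_iff_two_dvd (α := ℤ)).mpr h2)
  have hq1 : q ≠ 1 := exp_ne_one_of_not_dvd N hN c hndvd
  have hqM : q ^ M = -1 := by
    rw [hq, ← Complex.exp_nat_mul]
    rw [show ((M:ℕ):ℂ) * (2 * Real.pi * Complex.I * (c:ℂ) / N) = (c:ℂ) * Real.pi * Complex.I from by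
      rw [hNMC]; field_simp]
    exact exp_odd_pi_I c hcodd
  have hsum : ∑ k ∈ Finset.range M, q ^ k = -2 / (q - 1) := by
    rw [geom_sum_eq hq1, hqM]
    norm_num
  -- the inner sum
  have hinner : ∑ k : Fin N, Gmat N n k * Dmat N k m
      = ((Real.sqrt N : ℝ):ℂ)⁻¹ * ((Real.sqrt M : ℝ):ℂ)⁻¹ * (-2 / (q - 1)) := by
    set f : ℕ → ℂ := fun k =>
        ((Real.sqrt N : ℝ):ℂ)⁻¹ * Complex.exp (2 * Real.pi * Complex.I * ((n:ℕ):ℂ) * (k:ℂ) / N) *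
        (if k < M ∧ (m:ℕ) < M then dftEntry M k (m:ℕ)
         else if M ≤ k ∧ M ≤ (m:ℕ) then -dftEntry M (k - M) ((m:ℕ) - M) else 0) with hf
    have hstep1 : ∑ k : Fin N, Gmat N n k * Dmat N k m = ∑ k ∈ Finset.range N, f k := by
      rw [← Fin.sum_univ_eq_sum_range]
      refine Finset.sum_congr rfl fun k _ => ?_
      simp only [Gmat, Dmat, Matrix.of_apply, hNdiv, hf]
    rw [hstep1, show Finset.range N = Finset.range (M + M) from by rw [hNM],
      Finset.sum_range_add]
    by_cases hm : (m:ℕ) < M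
    · have hsum2 : ∑ j ∈ Finset.range M, f (M + j) = 0 := by
        refine Finset.sum_eq_zero fun j hj => ?_
        have h1 : ¬(M + j < M ∧ (m:ℕ) < M) := by omega
        have h2 : ¬(M ≤ M + j ∧ M ≤ (m:ℕ)) := by omega
        simp only [hf]
        rw [if_neg h1, if_neg h2, mul_zero]
      have hsum1 : ∑ k ∈ Finset.range M, f k
          = ∑ k ∈ Finset.range M, ((Real.sqrt N : ℝ):ℂ)⁻¹ * ((Real.sqrt M : ℝ):ℂ)⁻¹ * q ^ k := by
        refine Finset.sum_congr rfl fun k hk => ?_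
        have hkM : k < M := Finset.mem_range.mp hk
        simp only [hf]
        have hcond : k < M ∧ (m:ℕ) < M := ⟨hkM, hm⟩
        rw [if_pos hcond, dftEntry, hq, ← Complex.exp_nat_mul]
        rw [show ((Real.sqrt N:ℝ):ℂ)⁻¹ * Complex.exp (2 * Real.pi * Complex.I * ((n:ℕ):ℂ) * (k:ℂ) / N) *
            (((Real.sqrt M:ℝ):ℂ)⁻¹ * Complex.exp (-(2 * Real.pi * Complex.I * (k:ℂ) * ((m:ℕ):ℂ)) / M)) =
            ((Real.sqrt N:ℝ):ℂ)⁻¹ * ((Real.sqrt M:ℝ):ℂ)⁻¹ *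
            (Complex.exp (2 * Real.pi * Complex.I * ((n:ℕ):ℂ) * (k:ℂ) / N) *
             Complex.exp (-(2 * Real.pi * Complex.I * (k:ℂ) * ((m:ℕ):ℂ)) / M)) from by ring,
          ← Complex.exp_add]
        congr 1
        congr 1
        rw [hcC, hNMC]
        field_simp
        ring
      rw [hsum1, hsum2, ← Finset.mul_sum, hsum, add_zero]
    · have hm' : M ≤ (m:ℕ) := le_of_not_gt hm
      have hsum1 : ∑ k ∈ Finset.range M, f k = 0 := by
        refine Finset.sum_eq_zero fun k hk => ?_
        have hkM : k < M := Finset.mem_range.mp hk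
        have h1 : ¬(k < M ∧ (m:ℕ) < M) := by omega
        have h2 : ¬(M ≤ k ∧ M ≤ (m:ℕ)) := by omega
        simp only [hf]
        rw [if_neg h1, if_neg h2, mul_zero]
      have hsum2 : ∑ j ∈ Finset.range M, f (M + j)
          = ∑ j ∈ Finset.range M, ((Real.sqrt N : ℝ):ℂ)⁻¹ * ((Real.sqrt M : ℝ):ℂ)⁻¹ * q ^ j := by
        refine Finset.sum_congr rfl fun j hj => ?_
        have h1 : ¬(M + j < M ∧ (m:ℕ) < M) := by omega
        have h2 : M ≤ M + j ∧ M ≤ (m:ℕ) := ⟨by omega, hm'⟩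
        simp only [hf]
        rw [if_neg h1, if_pos h2]
        simp only [Nat.add_sub_cancel_left]
        rw [dftEntry]
        have hmM : (((m:ℕ) - M : ℕ):ℂ) = ((m:ℕ):ℂ) - ((M:ℕ):ℂ) := by
          push_cast [Nat.cast_sub hm']
          ring
        have hMj : (((M + j : ℕ)):ℂ) = ((M:ℕ):ℂ) + (j:ℂ) := by push_cast; ring
        have hAB : Complex.exp (2 * Real.pi * Complex.I * ((n:ℕ):ℂ) * ((M + j : ℕ):ℂ) / N) *
            Complex.exp (-(2 * Real.pi * Complex.I * ((j:ℕ):ℂ) * (((m:ℕ) - M : ℕ):ℂ)) / M)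
            = -(q ^ j) := by
          rw [← Complex.exp_add, hq, ← Complex.exp_nat_mul]
          rw [show 2 * Real.pi * Complex.I * ((n:ℕ):ℂ) * ((M + j : ℕ):ℂ) / N +
              (-(2 * Real.pi * Complex.I * ((j:ℕ):ℂ) * (((m:ℕ) - M : ℕ):ℂ)) / M)
              = ((n:ℕ):ℂ) * Real.pi * Complex.I + ((j:ℕ):ℂ) * (2 * Real.pi * Complex.I * (c:ℂ) / N)
                + ((j:ℕ):ℂ) * (2 * Real.pi * Complex.I) from by
            rw [hmM, hMj, hcC, hNMC]; field_simp; ring]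
          rw [Complex.exp_add, Complex.exp_add]
          have hnodd : Complex.exp (((n:ℕ):ℂ) * Real.pi * Complex.I) = -1 := by
            have := exp_odd_pi_I ((n:ℕ):ℤ) (by exact_mod_cast hn)
            rw [show ((((n:ℕ):ℤ)):ℂ) = ((n:ℕ):ℂ) from by push_cast; ring] at this
            exact this
          rw [hnodd, Complex.exp_nat_mul, Complex.exp_nat_mul, Complex.exp_two_pi_mul_I, one_pow]
          ring
        calc ((Real.sqrt N:ℝ):ℂ)⁻¹ * Complex.exp (2 * Real.pi * Complex.I * ((n:ℕ):ℂ) * ((M + j : ℕ):ℂ) / N) *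
              -(((Real.sqrt M:ℝ):ℂ)⁻¹ * Complex.exp (-(2 * Real.pi * Complex.I * ((j:ℕ):ℂ) * (((m:ℕ) - M : ℕ):ℂ)) / M))
            = -(((Real.sqrt N:ℝ):ℂ)⁻¹ * ((Real.sqrt M:ℝ):ℂ)⁻¹) *
              (Complex.exp (2 * Real.pi * Complex.I * ((n:ℕ):ℂ) * ((M + j : ℕ):ℂ) / N) *
               Complex.exp (-(2 * Real.pi * Complex.I * ((j:ℕ):ℂ) * (((m:ℕ) - M : ℕ):ℂ)) / M)) := by ring
          _ = -(((Real.sqrt N:ℝ):ℂ)⁻¹ * ((Real.sqrt M:ℝ):ℂ)⁻¹) * -(q ^ j) := by rw [hAB]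
          _ = ((Real.sqrt N:ℝ):ℂ)⁻¹ * ((Real.sqrt M:ℝ):ℂ)⁻¹ * q ^ j := by ring
      rw [hsum1, hsum2, ← Finset.mul_sum, hsum, zero_add]
  -- entry formula
  have hentry : bakerMatrix N n m
      = Complex.exp (Real.pi * Complex.I * ((n:ℕ):ℂ) / N)
        * (∑ k : Fin N, Gmat N n k * Dmat N k m)
        * Complex.exp (-(2 * Real.pi * Complex.I * ((m:ℕ):ℂ) / N)) := by
    have hZ2 : (Zmat N ^ 2)⁻¹
        = Matrix.diagonal (fun j : Fin N => Complex.exp (-(2 * Real.pi * Complex.I * ((j:ℕ):ℂ) / N))) := by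
      refine Matrix.inv_eq_right_inv ?_
      rw [Zmat, Matrix.diagonal_pow, Matrix.diagonal_mul_diagonal, ← Matrix.diagonal_one]
      refine congrArg Matrix.diagonal (funext fun j => ?_)
      show (Complex.exp (Real.pi * Complex.I * ((j:ℕ):ℂ) / N)) ^ 2
          * Complex.exp (-(2 * Real.pi * Complex.I * ((j:ℕ):ℂ) / N)) = 1
      rw [sq, ← Complex.exp_add, ← Complex.exp_add, ← Complex.exp_zero]
      congr 1
      ring
    show (Zmat N * (dftMatrix N)⁻¹ * Dmat N * (Zmat N ^ 2)⁻¹) n m = _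
    rw [Matrix.inv_eq_right_inv (dft_mul_g N hN), hZ2]
    rw [show Zmat N * Gmat N * Dmat N = Zmat N * (Gmat N * Dmat N) from by rw [mul_assoc]]
    rw [Matrix.mul_diagonal, Zmat, Matrix.diagonal_mul, Matrix.mul_apply]
  rw [hentry, hinner]
  set θ : ℝ := Real.pi * (((n:ℕ):ℝ) - 2 * ((m:ℕ):ℝ)) / N with hθ
  have hθC : ((θ:ℝ):ℂ) = Real.pi * (((n:ℕ):ℂ) - 2 * ((m:ℕ):ℂ)) / N := by
    rw [hθ]; push_cast; ring
  set u : ℂ := Complex.exp (((θ:ℝ):ℂ) * Complex.I) with hu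
  have hu0 : u ≠ 0 := Complex.exp_ne_zero _
  have hsinR : Real.sin θ ≠ 0 := by
    intro h0
    rw [Real.sin_eq_zero_iff] at h0
    obtain ⟨k, hk⟩ := h0
    have hπ : Real.pi ≠ 0 := Real.pi_ne_zero
    have hNR : ((N:ℕ):ℝ) ≠ 0 := Nat.cast_ne_zero.mpr hN.ne'
    rw [hθ, ← hcR] at hk
    have hk2 : Real.pi * ((c:ℝ)) = Real.pi * ((k:ℝ) * N) := by
      field_simp at hk
      linear_combination -Real.pi * hk
    have hk3 : (c:ℝ) = ((k * N : ℤ):ℝ) := by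
      push_cast
      exact mul_left_cancel₀ hπ hk2
    have : c = k * N := by exact_mod_cast hk3
    exact hndvd ⟨k, by rw [this]; ring⟩
  have hsinC : Complex.sin ((θ:ℝ):ℂ) ≠ 0 := by
    rw [← Complex.ofReal_sin]
    exact_mod_cast hsinR
  have hsin_eq : Complex.sin ((θ:ℝ):ℂ) = (u⁻¹ - u) * Complex.I / 2 := by
    rw [Complex.sin, hu, show -((θ:ℝ):ℂ) * Complex.I = -(((θ:ℝ):ℂ) * Complex.I) from by ring,
      Complex.exp_neg]
  have hcos_eq : Complex.cos ((θ:ℝ):ℂ) = (u + u⁻¹) / 2 := by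
    rw [Complex.cos, hu, show -((θ:ℝ):ℂ) * Complex.I = -(((θ:ℝ):ℂ) * Complex.I) from by ring,
      Complex.exp_neg]
  have hqu : q = u * u := by
    rw [hq, hu, ← Complex.exp_add]
    congr 1
    rw [hθC, hcC]
    ring
  have hq1' : q - 1 ≠ 0 := sub_ne_zero.mpr hq1
  have huu : u * u - 1 ≠ 0 := by rw [← hqu]; exact hq1'
  have hiu : u⁻¹ - u ≠ 0 := by
    intro h0
    apply hsinC
    rw [hsin_eq, h0]
    ring
  have hI : Complex.I ≠ 0 := Complex.I_ne_zero
  have h1u : (1 : ℂ) - u ^ 2 ≠ 0 := fun h => huu (by linear_combination -h)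
  have hsd : (u⁻¹ - u) * Complex.I / 2 ≠ 0 := by rw [← hsin_eq]; exact hsinC
  have hdiv : Complex.cos ((θ:ℝ):ℂ) / Complex.sin ((θ:ℝ):ℂ)
      = (u ^ 2 + 1) / ((1 - u ^ 2) * Complex.I) := by
    rw [hcos_eq, hsin_eq]
    rw [div_eq_div_iff hsd (mul_ne_zero h1u hI)]
    field_simp
  have hkey : -2 / (q - 1)
      = 1 + Complex.I * (Complex.cos ((θ:ℝ):ℂ) / Complex.sin ((θ:ℝ):ℂ)) := by
    rw [hdiv, hqu]
    rw [div_eq_iff huu]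
    field_simp
    ring
  have hcot : ((Real.cot θ : ℝ):ℂ)
      = Complex.cos ((θ:ℝ):ℂ) / Complex.sin ((θ:ℝ):ℂ) := by
    rw [Complex.ofReal_cot, Complex.cot_eq_cos_div_sin]
  have hphase : Complex.exp (Real.pi * Complex.I * ((n:ℕ):ℂ) / N) *
      Complex.exp (-(2 * Real.pi * Complex.I * ((m:ℕ):ℂ) / N))
      = Complex.exp (Real.pi * Complex.I * (((n:ℕ):ℂ) - 2 * ((m:ℕ):ℂ)) / N) := by
    rw [← Complex.exp_add]
    congr 1
    ring
  have hsqrtC : ((Real.sqrt N : ℝ):ℂ)⁻¹ * ((Real.sqrt M : ℝ):ℂ)⁻¹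
      = ((Real.sqrt 2 / N : ℝ):ℂ) := by
    rw [show ((Real.sqrt N : ℝ):ℂ)⁻¹ * ((Real.sqrt M : ℝ):ℂ)⁻¹
        = (((Real.sqrt N)⁻¹ * (Real.sqrt M)⁻¹ : ℝ):ℂ) from by push_cast; ring,
      sqrt_inv_aux N M hM hNM]
  rw [hcot, ← hkey, hsqrtC, ← hphase]
  ring

end
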